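/- If the state (Q, V) of a MutexQueue is reachable (not ⊥), then the queue sequence Q contains no duplicate elements: each process ID occurs at most once in Q. -/

import Mathlib

/-- One step of the MutexQueue transition function (non-broken transitions only). -/
inductive MQStep (N : ℕ) :
    (List (Fin N) × Finset (Fin N)) → (List (Fin N) × Finset (Fin N)) → Prop
  | enqueue (Q : List (Fin N)) (V : Finset (Fin N)) (p : Fin N) :
      p ∉ Q → MQStep N (Q, V) (Q ++ [p], V)
  | isHead (Q : List (Fin N)) (V : Finset (Fin N)) (p : Fin N) :
      p ∈ Q → p ∉ V → MQStep N (Q, V) (Q, insert p V)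
  | dequeue (Q : List (Fin N)) (V : Finset (Fin N)) (p : Fin N) :
      Q.head? = some p → p ∈ V → MQStep N (Q, V) (Q.tail, V.erase p)

/-- A state is reachable if obtained from the initial state `([], ∅)` by finitely
many non-broken transitions. -/
def MQReachable (N : ℕ) (s : List (Fin N) × Finset (Fin N)) : Prop :=
  Relation.ReflTransGen (MQStep N) ([], ∅) s

/-- In any reachable (non-broken) MutexQueue state (Q, V), the queue has no duplicates. -/
theorem queue_nodup (N : ℕ) (Q : List (Fin N)) (V : Finset (Fin N))
    (h : MQReachable N (Q, V)) : Q.Nodup := by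
  suffices h' : ∀ s, MQReachable N s → s.1.Nodup from h' (Q, V) h
  intro s hs
  induction hs with
  | refl => simp
  | tail _ step ih =>
    cases step with
    | enqueue Q V p hp => simp [List.nodup_append]; exact ⟨ih, fun a ha hap => hp (by subst hap; exact ha)⟩
    | isHead Q V p _ _ => exact ih
    | dequeue Q V p _ _ => exact ih.tail
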